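/- Let g : [0,\infty) \to \mathbb{R} be locally Lipschitz with g(0) = g(1) = 0, g > 0 on (0,1), g < 0 on (1,\infty), and let D > 0. Let U : (-\infty, 0] \to (0,\infty) be a bounded C^2 solution of -D U'' = g(U) with U(-\infty) = 1, U'(-\infty) = 0, and 0 < U(0) < 1. Then 0 < U(y) < 1 for all y \leq 0 and U is strictly decreasing on (-\infty, 0]. -/

import Mathlib

open Set Filter Real

/-- Let `g` be locally Lipschitz of Fisher-KPP type and `U` a bounded
positive solution of `-DU'' = g(U)` on `(-∞,0]` with `U(-∞) = 1`, `U'(-∞) = 0` and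
`0 < U(0) < 1`. Then `0 < U < 1` on `(-∞,0]` and `U` is strictly decreasing there. -/
theorem stmt11 (D : ℝ) (hD : 0 < D) (g : ℝ → ℝ)
    (hglip : LocallyLipschitz g)
    (hg0 : g 0 = 0) (hg1 : g 1 = 0)
    (hgpos : ∀ s ∈ Set.Ioo (0 : ℝ) 1, 0 < g s) (hgneg : ∀ s : ℝ, 1 < s → g s < 0)
    (U U' U'' : ℝ → ℝ)
    (hU : ∀ y : ℝ, y ≤ 0 → HasDerivAt U (U' y) y)
    (hU' : ∀ y : ℝ, y ≤ 0 → HasDerivAt U' (U'' y) y)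
    (heq : ∀ y : ℝ, y ≤ 0 → -D * U'' y = g (U y))
    (hpos : ∀ y : ℝ, y ≤ 0 → 0 < U y)
    (hbdd : ∃ M : ℝ, ∀ y : ℝ, y ≤ 0 → U y ≤ M)
    (hlim : Filter.Tendsto U Filter.atBot (nhds 1))
    (hlim' : Filter.Tendsto U' Filter.atBot (nhds 0))
    (hU0 : U 0 < 1) :
    (∀ y : ℝ, y ≤ 0 → 0 < U y ∧ U y < 1) ∧ StrictAntiOn U (Set.Iic 0) := by
  have hgc : Continuous g := hglip.continuous
  set G : ℝ → ℝ := fun s => ∫ t in (1:ℝ)..s, g t with hGdef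
  have hG : ∀ s : ℝ, HasDerivAt G (g s) s := fun s =>
    intervalIntegral.integral_hasDerivAt_right (hgc.intervalIntegrable _ _)
      (hgc.stronglyMeasurableAtFilter _ _) hgc.continuousAt
  have hGcont : Continuous G := continuous_iff_continuousAt.mpr fun s => (hG s).continuousAt
  have hG1 : G 1 = 0 := intervalIntegral.integral_same
  -- Energy is constant
  set E : ℝ → ℝ := fun y => D / 2 * (U' y) ^ 2 + G (U y) with hEdef
  have hE : ∀ y : ℝ, y ≤ 0 → HasDerivAt E 0 y := by
    intro y hy
    have d1 : HasDerivAt (fun y => D / 2 * (U' y) ^ 2)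
        (D / 2 * (2 * U' y ^ 1 * U'' y)) y := ((hU' y hy).pow 2).const_mul _
    have d2 : HasDerivAt (fun y => G (U y)) (g (U y) * U' y) y :=
      (hG (U y)).comp y (hU y hy)
    have := d1.add d2
    refine this.congr_deriv ?_
    rw [← heq y hy]; ring
  have hEconst : ∀ y : ℝ, y ≤ 0 → E y = E 0 := by
    intro y hy
    have h0 := constant_of_has_deriv_right_zero (f := E) (a := y) (b := 0)
      (fun x hx => ((hE x hx.2).continuousAt).continuousWithinAt)
      (fun x hx => (hE x hx.2.le).hasDerivWithinAt)
    exact (h0 0 (right_mem_Icc.2 hy)).symm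
  have hE0 : E 0 = 0 := by
    have h1 : Tendsto E atBot (nhds 0) := by
      have : Tendsto (fun y => D / 2 * (U' y) ^ 2 + G (U y)) atBot
          (nhds (D / 2 * (0:ℝ) ^ 2 + G 1)) :=
        (tendsto_const_nhds.mul (hlim'.pow 2)).add (hGcont.continuousAt.tendsto.comp hlim)
      simpa [hG1] using this
    have h2 : Tendsto E atBot (nhds (E 0)) := by
      refine tendsto_const_nhds.congr' ?_
      filter_upwards [eventually_le_atBot (0:ℝ)] with y hy
      exact (hEconst y hy).symm
    exact tendsto_nhds_unique h2 h1
  have energy : ∀ y : ℝ, y ≤ 0 → D / 2 * (U' y) ^ 2 + G (U y) = 0 := fun y hy =>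
    (hEconst y hy).trans hE0
  -- Lipschitz bound near 1
  obtain ⟨K, t, ht, hK⟩ := hglip 1
  obtain ⟨r, hr, hball⟩ := Metric.mem_nhds_iff.mp ht
  have hgb : ∀ s : ℝ, |s - 1| < r → |g s| ≤ K * |s - 1| := by
    intro s hs
    have h1 : (1:ℝ) ∈ t := hball (by simp [hr])
    have h2 : s ∈ t := hball (by simpa [Metric.mem_ball, Real.dist_eq] using hs)
    have := hK.dist_le_mul s h2 1 h1
    simpa [Real.dist_eq, hg1] using this
  -- quadratic bound on -G near 1
  have hGb : ∀ s : ℝ, |s - 1| < r → -G s ≤ K / 2 * (s - 1) ^ 2 := by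
    intro s hs
    rcases le_or_gt 1 s with h | h
    · have habs : ∀ x ∈ Icc (1:ℝ) s, -g x ≤ K * (x - 1) := by
        intro x hx
        have hx1 : |x - 1| < r := by
          rw [abs_of_nonneg (by linarith [hx.1])]
          calc x - 1 ≤ s - 1 := by linarith [hx.2]
          _ ≤ |s - 1| := le_abs_self _
          _ < r := hs
        have := hgb x hx1
        rw [abs_of_nonneg (show (0:ℝ) ≤ x - 1 by linarith [hx.1])] at this
        calc -g x ≤ |g x| := neg_le_abs _
        _ ≤ K * (x - 1) := this
      have hmono : (∫ x in (1:ℝ)..s, -g x) ≤ ∫ x in (1:ℝ)..s, K * (x - 1) := by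
        apply intervalIntegral.integral_mono_on h (hgc.neg.intervalIntegrable _ _)
          ((continuous_const.mul (continuous_id.sub continuous_const)).intervalIntegrable _ _)
        exact habs
      have hcomp : (∫ x in (1:ℝ)..s, K * (x - 1)) = K / 2 * (s - 1) ^ 2 := by
        rw [intervalIntegral.integral_const_mul]
        rw [intervalIntegral.integral_sub intervalIntegral.intervalIntegrable_id
          intervalIntegrable_const]
        rw [integral_id, intervalIntegral.integral_const]
        simp; ring
      have hneg : -G s = ∫ x in (1:ℝ)..s, -g x := by
        show -(∫ x in (1:ℝ)..s, g x) = _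
        rw [intervalIntegral.integral_neg]
      rw [hneg]
      calc (∫ x in (1:ℝ)..s, -g x) ≤ ∫ x in (1:ℝ)..s, K * (x - 1) := hmono
      _ = K / 2 * (s - 1) ^ 2 := hcomp
    · have habs : ∀ x ∈ Icc s 1, g x ≤ K * (1 - x) := by
        intro x hx
        have hx1 : |x - 1| < r := by
          rw [abs_of_nonpos (by linarith [hx.2])]
          calc -(x - 1) ≤ -(s - 1) := by linarith [hx.1]
          _ ≤ |s - 1| := neg_le_abs _
          _ < r := hs
        have := hgb x hx1
        rw [abs_of_nonpos (show x - 1 ≤ (0:ℝ) by linarith [hx.2])] at this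
        calc g x ≤ |g x| := le_abs_self _
        _ ≤ K * -(x - 1) := this
        _ = K * (1 - x) := by ring
      have hmono : (∫ x in s..(1:ℝ), g x) ≤ ∫ x in s..(1:ℝ), K * (1 - x) := by
        apply intervalIntegral.integral_mono_on h.le (hgc.intervalIntegrable _ _)
          ((continuous_const.mul (continuous_const.sub continuous_id)).intervalIntegrable _ _)
        exact habs
      have hcomp : (∫ x in s..(1:ℝ), K * (1 - x)) = K / 2 * (s - 1) ^ 2 := by
        rw [intervalIntegral.integral_const_mul]
        rw [intervalIntegral.integral_sub intervalIntegrable_const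
          intervalIntegral.intervalIntegrable_id]
        rw [integral_id, intervalIntegral.integral_const]
        simp; ring
      have hneg : -G s = ∫ x in s..(1:ℝ), g x := by
        show -(∫ x in (1:ℝ)..s, g x) = _
        rw [intervalIntegral.integral_symm s 1, neg_neg]
      rw [hneg]
      calc (∫ x in s..(1:ℝ), g x) ≤ ∫ x in s..(1:ℝ), K * (1 - x) := hmono
      _ = K / 2 * (s - 1) ^ 2 := hcomp
  -- Claim A : U never equals 1
  have claimA : ∀ y : ℝ, y ≤ 0 → U y ≠ 1 := by
    intro y₁ hy₁ hUy₁
    set A : Set ℝ := Icc y₁ 0 ∩ U ⁻¹' {1} with hAdef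
    have hUcont : ContinuousOn U (Icc y₁ 0) := fun x hx =>
      ((hU x hx.2).continuousAt).continuousWithinAt
    have hAclosed : IsClosed A :=
      hUcont.preimage_isClosed_of_isClosed isClosed_Icc isClosed_singleton
    have hAne : A.Nonempty := ⟨y₁, ⟨le_refl _, hy₁⟩, hUy₁⟩
    have hAbdd : BddAbove A := BddAbove.mono inter_subset_left bddAbove_Icc
    set c := sSup A with hcdef
    have hcA : c ∈ A := hAclosed.csSup_mem hAne hAbdd
    have hc0 : c ≤ 0 := hcA.1.2
    have hUc : U c = 1 := hcA.2
    have hclt : c < 0 := lt_of_le_of_ne hc0 (fun e => by rw [e] at hUc; linarith)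
    obtain ⟨δ, hδ, hδc⟩ := Metric.continuousAt_iff.mp ((hU c hc0).continuousAt) r hr
    set ε' := min (δ / 2) (-c) with hεdef
    have hε : 0 < ε' := lt_min (by linarith) (by linarith)
    set b := c + ε' with hbdef
    have hbc : c < b := by rw [hbdef]; linarith
    have hb0 : b ≤ 0 := by
      have := min_le_right (δ / 2) (-c)
      rw [hbdef]; have : ε' ≤ -c := this; linarith
    have hnear : ∀ x ∈ Icc c b, |U x - 1| < r := by
      intro x hx
      have hd : dist x c < δ := by
        rw [Real.dist_eq, abs_of_nonneg (by linarith [hx.1])]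
        have h1 : ε' ≤ δ / 2 := min_le_left _ _
        have h2 : x ≤ c + ε' := hx.2
        linarith
      have := hδc hd
      rwa [Real.dist_eq, hUc] at this
    set C := Real.sqrt (K / D) with hCdef
    have hbound : ∀ x ∈ Ico c b, ‖U' x‖ ≤ C * ‖U x - 1‖ + 0 := by
      intro x hx
      have hx0 : x ≤ 0 := le_trans hx.2.le hb0
      have hxr : |U x - 1| < r := hnear x ⟨hx.1, hx.2.le⟩
      have hGx := hGb (U x) hxr
      have hen := energy x hx0
      have hsq : (U' x) ^ 2 ≤ K / D * (U x - 1) ^ 2 := by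
        rw [div_mul_eq_mul_div, le_div_iff₀ hD]
        nlinarith
      have hKD : (0:ℝ) ≤ (K:ℝ) / D := div_nonneg K.coe_nonneg hD.le
      have habs : |U' x| ≤ C * |U x - 1| := by
        have h1 : Real.sqrt ((U' x) ^ 2) ≤ Real.sqrt ((K:ℝ) / D * (U x - 1) ^ 2) :=
          Real.sqrt_le_sqrt hsq
        rwa [Real.sqrt_sq_eq_abs, Real.sqrt_mul hKD, Real.sqrt_sq_eq_abs] at h1
      simpa [Real.norm_eq_abs] using habs
    have hgron := norm_le_gronwallBound_of_norm_deriv_right_le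
      (f := fun x => U x - 1) (f' := U') (δ := 0) (K := C) (ε := 0) (a := c) (b := b)
      (fun x hx =>
        (((hU x (le_trans hx.2 hb0)).continuousAt).sub continuousAt_const).continuousWithinAt)
      (fun x hx => ((hU x (le_trans hx.2.le hb0)).sub_const 1).hasDerivWithinAt)
      (by simp [hUc]) hbound
    have hb1 : U b = 1 := by
      have h1 := hgron b ⟨hbc.le, le_refl _⟩
      rw [gronwallBound_ε0_δ0] at h1
      have h2 : |U b - 1| ≤ 0 := by simpa [Real.norm_eq_abs] using h1
      have h3 : U b - 1 = 0 := abs_eq_zero.mp (le_antisymm h2 (abs_nonneg _))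
      linarith
    have hbA : b ∈ A := ⟨⟨le_trans hcA.1.1 hbc.le, hb0⟩, hb1⟩
    have : b ≤ c := le_csSup hAbdd hbA
    linarith
  -- Claim B : U < 1
  have hUlt1 : ∀ y : ℝ, y ≤ 0 → U y < 1 := by
    intro y hy
    rcases lt_or_ge (U y) 1 with h | h
    · exact h
    have h1 : 1 < U y := lt_of_le_of_ne h (fun e => claimA y hy e.symm)
    have hy0 : y < 0 := by
      rcases lt_or_eq_of_le hy with h' | h'
      · exact h'
      · exfalso; rw [h'] at h1; linarith
    have hIVT := intermediate_value_Icc' hy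
      (fun x hx => ((hU x hx.2).continuousAt).continuousWithinAt)
    have : (1:ℝ) ∈ Icc (U 0) (U y) := ⟨hU0.le, h1.le⟩
    obtain ⟨z, hz, hUz⟩ := hIVT this
    exact absurd hUz (claimA z hz.2)
  -- G (U y) < 0
  have hGneg : ∀ y : ℝ, y ≤ 0 → G (U y) < 0 := by
    intro y hy
    have h01 : U y ∈ Ioo (0:ℝ) 1 := ⟨hpos y hy, hUlt1 y hy⟩
    have hpos' : (0:ℝ) < ∫ x in (U y)..(1:ℝ), g x := by
      apply intervalIntegral.intervalIntegral_pos_of_pos_on (hgc.intervalIntegrable _ _)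
      · intro x hx; exact hgpos x ⟨lt_trans h01.1 hx.1, hx.2⟩
      · exact h01.2
    have : G (U y) = -(∫ x in (U y)..(1:ℝ), g x) := by
      show (∫ x in (1:ℝ)..(U y), g x) = _
      rw [intervalIntegral.integral_symm (U y) 1]
    rw [this]; linarith
  -- U' never zero
  have hU'ne : ∀ y : ℝ, y ≤ 0 → U' y ≠ 0 := by
    intro y hy h
    have := energy y hy
    rw [h] at this
    simp at this
    linarith [hGneg y hy]
  -- U' < 0
  have hU'neg : ∀ y : ℝ, y ≤ 0 → U' y < 0 := by
    have hev : ∀ᶠ y in atBot, (1 + U 0) / 2 < U y :=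
      hlim.eventually (eventually_gt_nhds (by linarith))
    obtain ⟨y₂, hy₂c, hy₂le⟩ := (hev.and (eventually_le_atBot (-1:ℝ))).exists
    have hy₂0 : y₂ < 0 := by linarith
    obtain ⟨ξ, hξ, hξs⟩ := exists_hasDerivAt_eq_slope U U' hy₂0
      (fun x hx => ((hU x hx.2).continuousAt).continuousWithinAt)
      (fun x hx => hU x hx.2.le)
    have hξneg : U' ξ < 0 := by
      rw [hξs]
      apply div_neg_of_neg_of_pos
      · linarith
      · linarith [hξ.1]
    intro y hy
    rcases lt_or_ge (U' y) 0 with h | h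
    · exact h
    have h' : 0 < U' y := lt_of_le_of_ne h (fun e => hU'ne y hy e.symm)
    have hsub : uIcc ξ y ⊆ Iic (0:ℝ) := by
      intro z hz
      have := hz.2
      have hm : max ξ y ≤ 0 := max_le hξ.2.le hy
      exact le_trans this hm
    have hIVT := intermediate_value_uIcc
      (fun x hx => ((hU' x (hsub hx)).continuousAt).continuousWithinAt)
    have h0m : (0:ℝ) ∈ uIcc (U' ξ) (U' y) := by
      rw [Set.mem_uIcc]
      exact Or.inl ⟨hξneg.le, h'.le⟩
    obtain ⟨z, hz, hU'z⟩ := hIVT h0m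
    exact absurd hU'z (hU'ne z (hsub hz))
  constructor
  · intro y hy; exact ⟨hpos y hy, hUlt1 y hy⟩
  · apply strictAntiOn_of_deriv_neg (convex_Iic 0)
    · exact fun x hx => ((hU x hx).continuousAt).continuousWithinAt
    · intro x hx
      rw [interior_Iic] at hx
      rw [(hU x hx.le).deriv]
      exact hU'neg x hx.le
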